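/- Let Φ : ℝ → ℝ be convex, let z ∈ ℝ, assume Φ is differentiable at z, and assume s ↦ exp(−Φ(s)) is integrable on (−∞, z). Then exp(−Φ(z)) + Φ'(z) · ∫_{(−∞,z)} exp(−Φ(s)) ds ≥ 0. -/

import Mathlib

open MeasureTheory Set Filter Topology

private lemma aux_exp_int (c z : ℝ) (hc : 0 < c) :
    IntegrableOn (fun s => Real.exp (c * (s - z))) (Set.Iio z) ∧
      (∫ s in Set.Iio z, Real.exp (c * (s - z))) = 1 / c := by
  set f : ℝ → ℝ := fun x => Real.exp (-c * x - c * z) with hf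
  have hderiv : ∀ x ∈ Ici (-z), HasDerivAt (fun x => -(Real.exp (-c * x - c * z) / c)) (f x) x := by
    intro x _
    have h1 : HasDerivAt (fun x : ℝ => -c * x - c * z) (-c) x := by
      simpa using (((hasDerivAt_id x).const_mul (-c)).sub_const (c * z))
    have h2 := ((h1.exp).div_const c).neg
    refine HasDerivAt.congr_deriv (f := fun x => -(Real.exp (-c * x - c * z) / c)) h2 ?_
    rw [hf]
    field_simp
  have hlim : Tendsto (fun x => -(Real.exp (-c * x - c * z) / c)) atTop (𝓝 0) := by
    have h1 : Tendsto (fun x : ℝ => -c * x - c * z) atTop atBot := by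
      apply Filter.tendsto_atBot_add_const_right
      exact Filter.Tendsto.const_mul_atTop_of_neg (neg_neg_iff_pos.mpr hc) tendsto_id
    have h2 := Real.tendsto_exp_atBot.comp h1
    have h3 := (h2.div_const c).neg
    simpa using h3
  have hpos : ∀ x ∈ Ioi (-z), 0 ≤ f x := fun x _ => (Real.exp_pos _).le
  have hint2 : IntegrableOn f (Ioi (-z)) :=
    integrableOn_Ioi_deriv_of_nonneg' hderiv hpos hlim
  have hval : (∫ x in Ioi (-z), f x) = 1 / c := by
    rw [integral_Ioi_of_hasDerivAt_of_nonneg' hderiv hpos hlim]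
    simp [hf]
  have hkey : (fun s => Real.exp (c * (s - z))) = fun x => f (-x) := by
    funext x
    simp only [hf]
    ring_nf
  constructor
  · have A : MeasurableEmbedding fun x : ℝ => -x :=
      (Homeomorph.neg ℝ).measurableEmbedding
    have := (A.integrableOn_map_iff (f := f) (μ := volume) (s := Ioi (-z)))
    rw [Measure.map_neg_eq_self (volume : Measure ℝ)] at this
    have h3 : IntegrableOn (f ∘ fun x : ℝ => -x) ((fun x : ℝ => -x) ⁻¹' Ioi (-z)) volume :=
      this.mp hint2
    have hpre : ((fun x : ℝ => -x) ⁻¹' Ioi (-z)) = Iio z := by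
      ext x; simp [neg_lt_neg_iff]
    rw [hpre] at h3
    rw [hkey]
    exact h3
  · rw [hkey, ← integral_Iic_eq_integral_Iio, integral_comp_neg_Iic, hval]

/-- For convex `Φ` differentiable at `z`,
`exp(−Φ(z)) + Φ'(z) · ∫_{(−∞,z)} exp(−Φ(s)) ds ≥ 0`. -/
theorem stmt_5 (Φ : ℝ → ℝ) (hΦ : ConvexOn ℝ Set.univ Φ)
    (z d : ℝ) (hd : HasDerivAt Φ d z)
    (hint : IntegrableOn (fun s => Real.exp (-Φ s)) (Set.Iio z)) :
    0 ≤ Real.exp (-Φ z) + d * ∫ s in Set.Iio z, Real.exp (-Φ s) := by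
  have hI : 0 ≤ ∫ s in Set.Iio z, Real.exp (-Φ s) :=
    setIntegral_nonneg measurableSet_Iio fun s _ => (Real.exp_pos _).le
  rcases le_or_gt 0 d with hd0 | hd0
  · have := mul_nonneg hd0 hI
    have := Real.exp_pos (-Φ z)
    linarith
  · set c : ℝ := -d with hcdef
    have hc : 0 < c := by simpa [hcdef] using hd0
    obtain ⟨hgint, hgval⟩ := aux_exp_int c z hc
    -- pointwise bound on Iio z
    have hbound : ∀ s ∈ Set.Iio z,
        Real.exp (-Φ s) ≤ Real.exp (-Φ z) * Real.exp (c * (s - z)) := by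
      intro s hs
      have hslope := hΦ.slope_le_of_hasDerivAt (Set.mem_univ s) (Set.mem_univ z) hs hd
      rw [slope_def_field] at hslope
      have hzs : 0 < z - s := sub_pos.mpr hs
      have h1 : Φ z - Φ s ≤ d * (z - s) := by
        calc Φ z - Φ s = (Φ z - Φ s) / (z - s) * (z - s) := by field_simp
        _ ≤ d * (z - s) := mul_le_mul_of_nonneg_right hslope hzs.le
      rw [← Real.exp_add]
      apply Real.exp_le_exp.mpr
      have : c * (s - z) = d * (z - s) := by rw [hcdef]; ring
      linarith [this ▸ h1]
    have hmono : (∫ s in Set.Iio z, Real.exp (-Φ s))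
        ≤ ∫ s in Set.Iio z, Real.exp (-Φ z) * Real.exp (c * (s - z)) :=
      setIntegral_mono_on hint (hgint.const_mul _) measurableSet_Iio hbound
    rw [integral_const_mul, hgval] at hmono
    have hd' : d = -c := by rw [hcdef]; ring
    rw [hd']
    have : c * (∫ s in Set.Iio z, Real.exp (-Φ s)) ≤ Real.exp (-Φ z) := by
      calc c * (∫ s in Set.Iio z, Real.exp (-Φ s))
          ≤ c * (Real.exp (-Φ z) * (1 / c)) := by
            exact mul_le_mul_of_nonneg_left hmono hc.le
        _ = Real.exp (-Φ z) := by field_simp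
    nlinarith
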